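/- arXiv:1405.2135 — 2 statements merged into one kernel-verified Lean document; each statement's English description precedes it below -/
import Mathlib

section
/- Converse of Goss's duality theorem: let F be a field of characteristic p > 0, complete with respect to a non-Archimedean norm. Let H be an additive generator with a two-sided composition inverse Hinv (Hinv∘H = T = H∘Hinv) which is also an additive generator. Let u, v : ℕ → F be null sequences with u_0 = v_0 = 1. If (Flow(u,P))∘H = Flow(v, P∘H) holds for every bounded P ∈ F⟦T⟧, then for every k ≥ 0, v_k = ∑_{m≥0} (coeff_m(Hinv^k))·u_m (these sums converging in F). -/
open Filter

/-- Composition `P ∘ H` of power series, for `H` with zero constant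
coefficient. -/
noncomputable def psComp {F : Type*} [Field F] (P H : PowerSeries F) : PowerSeries F :=
  PowerSeries.mk fun n => ∑ k ∈ Finset.range (n + 1),
    PowerSeries.coeff k P * PowerSeries.coeff n (H ^ k)

/-- The flow of the umbra `u` applied to the power series `P`: the `n`-th
coefficient is the (convergent) sum `∑_k choose(n+k,k)·u_k·a_{n+k}`. -/
noncomputable def psFlow {F : Type*} [NormedField F] (u : ℕ → F) (P : PowerSeries F) :
    PowerSeries F :=
  PowerSeries.mk fun n =>
    ∑' k : ℕ, ((n + k).choose k : F) * u k * PowerSeries.coeff (n + k) P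

/-- An additive generator: zero constant coefficient, supported on exponents
that are powers of `p`, all coefficients of norm at most `1`, and coefficient
of `T` of norm exactly `1`. -/
def IsAddGen {F : Type*} [NormedField F] (p : ℕ) (H : PowerSeries F) : Prop :=
  PowerSeries.constantCoeff H = 0 ∧
    (∀ n : ℕ, (¬ ∃ m : ℕ, n = p ^ m) → PowerSeries.coeff n H = 0) ∧
    (∀ n : ℕ, ‖PowerSeries.coeff n H‖ ≤ 1) ∧ ‖PowerSeries.coeff 1 H‖ = 1

section Aux

variable {F : Type*} [Field F]

lemma coeff_pow_zero_of_lt (H : PowerSeries F) (hH : PowerSeries.constantCoeff H = 0)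
    {i s : ℕ} (h : s < i) : PowerSeries.coeff s (H ^ i) = 0 := by
  have hx : (PowerSeries.X : PowerSeries F) ∣ H := PowerSeries.X_dvd_iff.mpr hH
  exact PowerSeries.X_pow_dvd_iff.mp (pow_dvd_pow_of_dvd hx i) s h

lemma coeff_eval₂_poly (H : PowerSeries F) (hH : PowerSeries.constantCoeff H = 0)
    (q : Polynomial F) (n : ℕ) :
    PowerSeries.coeff n (q.eval₂ (PowerSeries.C) H) =
      ∑ k ∈ Finset.range (n + 1), q.coeff k * PowerSeries.coeff n (H ^ k) := by
  have hdeg : q.natDegree < max (q.natDegree + 1) (n + 1) :=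
    lt_of_lt_of_le (Nat.lt_succ_self _) (le_max_left _ _)
  rw [Polynomial.eval₂_eq_sum_range' _ hdeg, map_sum]
  have h1 : ∀ i ∈ Finset.range (max (q.natDegree + 1) (n + 1)),
      PowerSeries.coeff n (PowerSeries.C (q.coeff i) * H ^ i)
        = q.coeff i * PowerSeries.coeff n (H ^ i) := fun i _ => by
    rw [PowerSeries.coeff_C_mul]
  rw [Finset.sum_congr rfl h1]
  symm
  apply Finset.sum_subset (Finset.range_subset_range.mpr (le_max_right _ _))
  intro x _ hnx
  have hx : n < x := by simpa using hnx
  rw [coeff_pow_zero_of_lt H hH hx, mul_zero]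

lemma coeff_psComp (P H : PowerSeries F) (n : ℕ) :
    PowerSeries.coeff n (psComp P H) =
      ∑ k ∈ Finset.range (n + 1), PowerSeries.coeff k P * PowerSeries.coeff n (H ^ k) :=
  PowerSeries.coeff_mk _ _

lemma coeff_psComp_eq_eval₂ (H : PowerSeries F) (hH : PowerSeries.constantCoeff H = 0)
    (P : PowerSeries F) {n m : ℕ} (hnm : n < m) :
    PowerSeries.coeff n (psComp P H) =
      PowerSeries.coeff n ((P.trunc m).eval₂ (PowerSeries.C) H) := by
  rw [coeff_psComp, coeff_eval₂_poly H hH]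
  refine Finset.sum_congr rfl fun k hk => ?_
  rw [PowerSeries.coeff_trunc]
  have : k < m := lt_of_lt_of_le (Finset.mem_range.mp hk) hnm
  rw [if_pos this]

lemma psComp_mul (A B H : PowerSeries F) (hH : PowerSeries.constantCoeff H = 0) :
    psComp (A * B) H = psComp A H * psComp B H := by
  ext n
  rw [coeff_psComp_eq_eval₂ H hH _ (Nat.lt_succ_self n), PowerSeries.coeff_mul]
  have hR : ∑ p ∈ Finset.HasAntidiagonal.antidiagonal n,
      PowerSeries.coeff p.1 (psComp A H) * PowerSeries.coeff p.2 (psComp B H) =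
      ∑ p ∈ Finset.HasAntidiagonal.antidiagonal n,
      PowerSeries.coeff p.1 ((A.trunc (n+1)).eval₂ (PowerSeries.C) H) *
      PowerSeries.coeff p.2 ((B.trunc (n+1)).eval₂ (PowerSeries.C) H) := by
    refine Finset.sum_congr rfl fun p hp => ?_
    have h1 : p.1 ≤ n := Finset.HasAntidiagonal.antidiagonal.fst_le hp
    have h2 : p.2 ≤ n := Finset.HasAntidiagonal.antidiagonal.snd_le hp
    rw [coeff_psComp_eq_eval₂ H hH _ (Nat.lt_succ_of_le h1),
        coeff_psComp_eq_eval₂ H hH _ (Nat.lt_succ_of_le h2)]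
  rw [hR, ← PowerSeries.coeff_mul, ← Polynomial.eval₂_mul]
  rw [coeff_eval₂_poly H hH, coeff_eval₂_poly H hH]
  refine Finset.sum_congr rfl fun k hk => ?_
  congr 1
  have hkn : k < n + 1 := Finset.mem_range.mp hk
  rw [PowerSeries.coeff_trunc, if_pos hkn, PowerSeries.coeff_mul, Polynomial.coeff_mul]
  refine Finset.sum_congr rfl fun p hp => ?_
  have h1 : p.1 ≤ k := Finset.HasAntidiagonal.antidiagonal.fst_le hp
  have h2 : p.2 ≤ k := Finset.HasAntidiagonal.antidiagonal.snd_le hp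
  rw [PowerSeries.coeff_trunc, PowerSeries.coeff_trunc,
      if_pos (lt_of_le_of_lt h1 hkn), if_pos (lt_of_le_of_lt h2 hkn)]

lemma psComp_one (H : PowerSeries F) : psComp 1 H = 1 := by
  ext n
  rw [coeff_psComp, Finset.sum_eq_single 0]
  · simp
  · intro k _ hk
    simp [PowerSeries.coeff_one, hk]
  · simp

lemma psComp_pow (Q H : PowerSeries F) (hH : PowerSeries.constantCoeff H = 0) (k : ℕ) :
    psComp (Q ^ k) H = (psComp Q H) ^ k := by
  induction k with
  | zero => simpa using psComp_one H
  | succ k ih => rw [pow_succ, pow_succ, psComp_mul _ _ _ hH, ih]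

end Aux

lemma coeff_pow_norm_le {F : Type*} [NormedField F] [IsUltrametricDist F]
    (Hinv : PowerSeries F) (hb : ∀ n : ℕ, ‖PowerSeries.coeff n Hinv‖ ≤ 1) (k n : ℕ) :
    ‖PowerSeries.coeff n (Hinv ^ k)‖ ≤ 1 := by
  induction k generalizing n with
  | zero =>
    rw [pow_zero, PowerSeries.coeff_one]
    split <;> simp
  | succ k ih =>
    rw [pow_succ, PowerSeries.coeff_mul]
    refine IsUltrametricDist.norm_sum_le_of_forall_le_of_nonneg zero_le_one fun p _ => ?_
    rw [norm_mul]
    simpa using mul_le_mul (ih p.1) (hb p.2) (norm_nonneg _) zero_le_one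

/-- Converse of Goss's duality theorem: if the flow of `v` is conjugate to the
flow of `u` under the additive isomorphism generated by `H` on all bounded
power series, then `v_k = ∑_m coeff_m(Hinv^k)·u_m` for every `k`, these sums
converging in `F`. -/
theorem goss_duality_converse {F : Type*} [NormedField F] [CompleteSpace F]
    (hna : ∀ x y : F, ‖x + y‖ ≤ max ‖x‖ ‖y‖)
    (p : ℕ) (hp : p.Prime) (hchar : CharP F p)
    (H Hinv : PowerSeries F) (hH : IsAddGen p H) (hHinv : IsAddGen p Hinv)
    (hinv₁ : psComp Hinv H = PowerSeries.X) (hinv₂ : psComp H Hinv = PowerSeries.X)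
    (u v : ℕ → F) (hu : Tendsto u atTop (nhds 0)) (hv : Tendsto v atTop (nhds 0))
    (hu0 : u 0 = 1) (hv0 : v 0 = 1)
    (hdual : ∀ P : PowerSeries F, (∃ c : ℝ, 0 < c ∧
        ∀ n : ℕ, ‖PowerSeries.coeff n P‖ < c) →
      psComp (psFlow u P) H = psFlow v (psComp P H)) :
    ∀ k : ℕ,
      (Summable fun m : ℕ => PowerSeries.coeff m (Hinv ^ k) * u m) ∧
        v k = ∑' m : ℕ, PowerSeries.coeff m (Hinv ^ k) * u m := by
  haveI : IsUltrametricDist F :=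
    IsUltrametricDist.isUltrametricDist_of_forall_norm_add_le_max_norm hna
  intro k
  have hb : ∀ n : ℕ, ‖PowerSeries.coeff n (Hinv ^ k)‖ ≤ 1 :=
    coeff_pow_norm_le Hinv hHinv.2.2.1 k
  have hsum : Summable fun m : ℕ => PowerSeries.coeff m (Hinv ^ k) * u m := by
    apply NonarchimedeanAddGroup.summable_of_tendsto_cofinite_zero
    rw [Nat.cofinite_eq_atTop]
    refine squeeze_zero_norm (fun m => ?_) (tendsto_zero_iff_norm_tendsto_zero.mp hu)
    rw [norm_mul]
    exact mul_le_of_le_one_left (norm_nonneg _) (hb m)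
  refine ⟨hsum, ?_⟩
  have hP := hdual (Hinv ^ k) ⟨2, two_pos, fun n => lt_of_le_of_lt (hb n) one_lt_two⟩
  rw [psComp_pow _ _ hH.1, hinv₁] at hP
  have h0 := congrArg (PowerSeries.coeff 0) hP
  have hL : PowerSeries.coeff 0 (psComp (psFlow u (Hinv ^ k)) H) =
      ∑' m : ℕ, PowerSeries.coeff m (Hinv ^ k) * u m := by
    rw [coeff_psComp, Finset.sum_range_one, pow_zero, PowerSeries.coeff_one,
      if_pos rfl, mul_one, psFlow, PowerSeries.coeff_mk]
    exact tsum_congr fun m => by simp [Nat.choose_self, mul_comm]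
  have hR : PowerSeries.coeff 0 (psFlow v (PowerSeries.X ^ k)) = v k := by
    rw [psFlow, PowerSeries.coeff_mk]
    rw [tsum_eq_single k]
    · simp [PowerSeries.coeff_X_pow]
    · intro j hj
      simp [PowerSeries.coeff_X_pow, hj]
  rw [hL, hR] at h0
  exact h0.symm
end

section
/- Binomial sequences give one-parameter flows: let F be a field complete with respect to a non-Archimedean norm, and let b, c : ℕ → F be null sequences with b_0 = c_0 = 1. Define d : ℕ → F by d_n := ∑_{k=0}^{n} choose(n,k)·b_k·c_{n-k}. Then d is a null sequence with d_0 = 1, and for every bounded P ∈ F⟦T⟧ one has Flow(d,P) = Flow(b, Flow(c,P)). (Applied to an umbral map satisfying the binomial theorem this says 𝒟_ℱ(x+y) = 𝒟_ℱ(x)∘𝒟_ℱ(y).) -/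
open Filter

section aux
variable {F : Type*} [NormedField F]

lemma na_norm_natCast (hna : ∀ x y : F, ‖x + y‖ ≤ max ‖x‖ ‖y‖) (m : ℕ) : ‖(m : F)‖ ≤ 1 := by
  induction m with
  | zero => simp
  | succ k ih =>
    push_cast
    exact (hna _ _).trans (max_le ih (by simp))

lemma na_sum_lt (hna : ∀ x y : F, ‖x + y‖ ≤ max ‖x‖ ‖y‖) {ι : Type*} {t : Finset ι}
    {f : ι → F} {ε : ℝ} (hε : 0 < ε) (h : ∀ i ∈ t, ‖f i‖ < ε) :
    ‖∑ i ∈ t, f i‖ < ε := by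
  classical
  induction t using Finset.induction_on with
  | empty => simpa using hε
  | @insert x s hx ih =>
    rw [Finset.sum_insert hx]
    exact lt_of_le_of_lt (hna _ _)
      (max_lt (h _ (Finset.mem_insert_self _ _))
        (ih fun i hi => h i (Finset.mem_insert_of_mem hi)))

lemma na_summable [CompleteSpace F] (hna : ∀ x y : F, ‖x + y‖ ≤ max ‖x‖ ‖y‖)
    {ι : Type*} {f : ι → F} (h : Tendsto f cofinite (nhds 0)) : Summable f := by
  rw [summable_iff_vanishing_norm]
  intro ε hε
  have hfin : {i | ¬ ‖f i‖ < ε}.Finite := by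
    have := Metric.tendsto_nhds.mp h ε hε
    rw [Filter.eventually_cofinite] at this
    simpa [dist_zero_right] using this
  classical
  refine ⟨hfin.toFinset, fun t ht => na_sum_lt hna hε fun i hi => ?_⟩
  by_contra hcon
  exact (Finset.disjoint_left.mp ht hi) (hfin.mem_toFinset.mpr hcon)

lemma choose_identity (n j i : ℕ) :
    (n + j).choose j * (n + j + i).choose i = (n + j + i).choose (j + i) * (j + i).choose j := by
  have : (((n + j).choose j : ℚ)) * ((n + j + i).choose i : ℚ)
      = ((n + j + i).choose (j + i) : ℚ) * ((j + i).choose j : ℚ) := by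
    rw [Nat.cast_choose ℚ (Nat.le_add_left j n), Nat.cast_choose ℚ (Nat.le_add_left i (n+j)),
      Nat.cast_choose ℚ (by omega : j + i ≤ n + j + i), Nat.cast_choose ℚ (Nat.le_add_right j i)]
    have h1 : n + j - j = n := by omega
    have h2 : n + j + i - i = n + j := by omega
    have h3 : n + j + i - (j + i) = n := by omega
    have h4 : j + i - j = i := by omega
    rw [h1, h2, h3, h4]
    have := Nat.factorial_pos n
    have := Nat.factorial_pos j
    have := Nat.factorial_pos i
    have := Nat.factorial_pos (n+j)
    have := Nat.factorial_pos (j+i)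
    field_simp
  exact_mod_cast this

end aux

/-- Binomial sequences give one-parameter flows: if
`d_n = ∑_{k=0}^n choose(n,k)·b_k·c_{n-k}` for null sequences `b, c` with
`b_0 = c_0 = 1`, then `d` is a null sequence with `d_0 = 1` and
`Flow(d,P) = Flow(b, Flow(c,P))` for every bounded `P`. -/
theorem flow_binomial {F : Type*} [NormedField F] [CompleteSpace F]
    (hna : ∀ x y : F, ‖x + y‖ ≤ max ‖x‖ ‖y‖)
    (b c : ℕ → F) (hb : Tendsto b atTop (nhds 0)) (hc : Tendsto c atTop (nhds 0))
    (hb0 : b 0 = 1) (hc0 : c 0 = 1)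
    (d : ℕ → F)
    (hd : ∀ n : ℕ, d n = ∑ k ∈ Finset.range (n + 1), (n.choose k : F) * b k * c (n - k)) :
    Tendsto d atTop (nhds 0) ∧ d 0 = 1 ∧
      ∀ P : PowerSeries F,
        (∃ C : ℝ, 0 < C ∧ ∀ n : ℕ, ‖PowerSeries.coeff n P‖ < C) →
        psFlow d P = psFlow b (psFlow c P) := by
  -- uniform bounds for b and c
  obtain ⟨Bb, hBb0, hBb⟩ : ∃ B : ℝ, 0 < B ∧ ∀ k, ‖b k‖ ≤ B := by
    obtain ⟨B, hB⟩ := (hb.norm.bddAbove_range)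
    exact ⟨max B 1, lt_of_lt_of_le one_pos (le_max_right _ _),
      fun k => le_trans (hB (Set.mem_range_self k)) (le_max_left _ _)⟩
  obtain ⟨Bc, hBc0, hBc⟩ : ∃ B : ℝ, 0 < B ∧ ∀ k, ‖c k‖ ≤ B := by
    obtain ⟨B, hB⟩ := (hc.norm.bddAbove_range)
    exact ⟨max B 1, lt_of_lt_of_le one_pos (le_max_right _ _),
      fun k => le_trans (hB (Set.mem_range_self k)) (le_max_left _ _)⟩
  have hfinb : ∀ δ : ℝ, 0 < δ → {j : ℕ | ¬ ‖b j‖ < δ}.Finite := by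
    intro δ hδ
    have hb' := hb
    rw [← Nat.cofinite_eq_atTop] at hb'
    have := Metric.tendsto_nhds.mp hb' δ hδ
    rw [Filter.eventually_cofinite] at this
    simpa [dist_zero_right] using this
  have hfinc : ∀ δ : ℝ, 0 < δ → {j : ℕ | ¬ ‖c j‖ < δ}.Finite := by
    intro δ hδ
    have hc' := hc
    rw [← Nat.cofinite_eq_atTop] at hc'
    have := Metric.tendsto_nhds.mp hc' δ hδ
    rw [Filter.eventually_cofinite] at this
    simpa [dist_zero_right] using this
  -- d is null
  have hd0 : Tendsto d atTop (nhds 0) := by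
    rw [NormedAddCommGroup.tendsto_nhds_zero]
    intro ε hε
    obtain ⟨N₁, hN₁⟩ := Filter.eventually_atTop.mp
      (NormedAddCommGroup.tendsto_nhds_zero.mp hb (ε / Bc) (div_pos hε hBc0))
    obtain ⟨N₂, hN₂⟩ := Filter.eventually_atTop.mp
      (NormedAddCommGroup.tendsto_nhds_zero.mp hc (ε / Bb) (div_pos hε hBb0))
    rw [Filter.eventually_atTop]
    refine ⟨N₁ + N₂, fun n hn => ?_⟩
    rw [hd n]
    refine na_sum_lt hna hε fun k hk => ?_
    rw [Finset.mem_range] at hk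
    have hterm : ‖(n.choose k : F) * b k * c (n - k)‖ ≤ ‖b k‖ * ‖c (n - k)‖ := by
      rw [norm_mul, norm_mul]
      exact mul_le_mul_of_nonneg_right
        (mul_le_of_le_one_left (norm_nonneg _) (na_norm_natCast hna _)) (norm_nonneg _)
    refine lt_of_le_of_lt hterm ?_
    by_cases hkN : N₁ ≤ k
    · calc ‖b k‖ * ‖c (n - k)‖ ≤ ‖b k‖ * Bc :=
            mul_le_mul_of_nonneg_left (hBc _) (norm_nonneg _)
        _ < (ε / Bc) * Bc := mul_lt_mul_of_pos_right (hN₁ k hkN) hBc0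
        _ = ε := div_mul_cancel₀ ε (ne_of_gt hBc0)
    · have hnk : N₂ ≤ n - k := by omega
      calc ‖b k‖ * ‖c (n - k)‖ ≤ Bb * ‖c (n - k)‖ :=
            mul_le_mul_of_nonneg_right (hBb _) (norm_nonneg _)
        _ < Bb * (ε / Bb) := mul_lt_mul_of_pos_left (hN₂ _ hnk) hBb0
        _ = ε := mul_div_cancel₀ ε (ne_of_gt hBb0)
  refine ⟨hd0, by simp [hd, hb0, hc0], fun P hP => ?_⟩
  obtain ⟨C, hC0, hC⟩ := hP
  apply PowerSeries.ext
  intro n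
  simp only [psFlow, PowerSeries.coeff_mk]
  set g : ℕ × ℕ → F := fun p =>
    ((n + p.1).choose p.1 : F) * b p.1 *
      (((n + p.1 + p.2).choose p.2 : F) * c p.2 * PowerSeries.coeff (n + p.1 + p.2) P)
    with hg_def
  have hbound : ∀ p : ℕ × ℕ, ‖g p‖ ≤ ‖b p.1‖ * (‖c p.2‖ * C) := by
    intro p
    have h1 := na_norm_natCast hna ((n + p.1).choose p.1)
    have h2 := na_norm_natCast hna ((n + p.1 + p.2).choose p.2)
    have h3 := (hC (n + p.1 + p.2)).le
    have hnn : (0:ℝ) ≤ ‖c p.2‖ := norm_nonneg _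
    calc ‖g p‖ = ‖((n + p.1).choose p.1 : F)‖ * ‖b p.1‖ *
          (‖((n + p.1 + p.2).choose p.2 : F)‖ * ‖c p.2‖ *
            ‖PowerSeries.coeff (n + p.1 + p.2) P‖) := by
          simp [hg_def, norm_mul]
      _ ≤ 1 * ‖b p.1‖ * (1 * ‖c p.2‖ * C) := by gcongr
      _ = ‖b p.1‖ * (‖c p.2‖ * C) := by ring
  have hg : Summable g := by
    apply na_summable hna
    rw [Metric.tendsto_nhds]
    intro ε hε
    rw [Filter.eventually_cofinite]
    have hεb : 0 < ε / (Bc * C) := div_pos hε (mul_pos hBc0 hC0)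
    have hεc : 0 < ε / (Bb * C) := div_pos hε (mul_pos hBb0 hC0)
    have hsub : {p : ℕ × ℕ | ¬ dist (g p) 0 < ε} ⊆
        {j : ℕ | ¬ ‖b j‖ < ε / (Bc * C)} ×ˢ {i : ℕ | ¬ ‖c i‖ < ε / (Bb * C)} := by
      intro p hp
      simp only [Set.mem_setOf_eq, dist_zero_right, not_lt] at hp
      constructor
      · simp only [Set.mem_setOf_eq, not_lt]
        by_contra hcon
        push_neg at hcon
        have : ‖g p‖ < ε := by
          calc ‖g p‖ ≤ ‖b p.1‖ * (‖c p.2‖ * C) := hbound p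
            _ ≤ ‖b p.1‖ * (Bc * C) := by
                have := hBc p.2
                gcongr
            _ < (ε / (Bc * C)) * (Bc * C) :=
                mul_lt_mul_of_pos_right hcon (mul_pos hBc0 hC0)
            _ = ε := div_mul_cancel₀ ε (ne_of_gt (mul_pos hBc0 hC0))
        linarith
      · simp only [Set.mem_setOf_eq, not_lt]
        by_contra hcon
        push_neg at hcon
        have : ‖g p‖ < ε := by
          calc ‖g p‖ ≤ ‖b p.1‖ * (‖c p.2‖ * C) := hbound p
            _ = ‖c p.2‖ * (‖b p.1‖ * C) := by ring
            _ ≤ ‖c p.2‖ * (Bb * C) := by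
                have := hBb p.1
                gcongr
            _ < (ε / (Bb * C)) * (Bb * C) :=
                mul_lt_mul_of_pos_right hcon (mul_pos hBb0 hC0)
            _ = ε := div_mul_cancel₀ ε (ne_of_gt (mul_pos hBb0 hC0))
        linarith
    exact Set.Finite.subset ((hfinb _ hεb).prod (hfinc _ hεc)) hsub
  -- the antidiagonal sums give the coefficients of psFlow d P
  have step3 : ∀ m : ℕ, ∑ p ∈ Finset.HasAntidiagonal.antidiagonal m, g p
      = ((n + m).choose m : F) * d m * PowerSeries.coeff (n + m) P := by
    intro m
    rw [Finset.Nat.sum_antidiagonal_eq_sum_range_succ_mk, hd m, Finset.mul_sum, Finset.sum_mul]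
    refine Finset.sum_congr rfl fun k hk => ?_
    rw [Finset.mem_range] at hk
    have hkm : k ≤ m := by omega
    have hch : (n + k).choose k * (n + m).choose (m - k) = (n + m).choose m * m.choose k := by
      have h := choose_identity n k (m - k)
      rw [show k + (m - k) = m by omega, show n + k + (m - k) = n + m by omega] at h
      exact h
    have hcast : ((n + k).choose k : F) * ((n + m).choose (m - k) : F)
        = ((n + m).choose m : F) * (m.choose k : F) := by exact_mod_cast congrArg (Nat.cast : ℕ → F) hch
    simp only [hg_def]
    rw [show n + k + (m - k) = n + m by omega]
    calc ((n + k).choose k : F) * b k *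
          (((n + m).choose (m - k) : F) * c (m - k) * PowerSeries.coeff (n + m) P)
        = (((n + k).choose k : F) * ((n + m).choose (m - k) : F)) *
            (b k * c (m - k) * PowerSeries.coeff (n + m) P) := by ring
      _ = (((n + m).choose m : F) * (m.choose k : F)) *
            (b k * c (m - k) * PowerSeries.coeff (n + m) P) := by rw [hcast]
      _ = ((n + m).choose m : F) * ((m.choose k : F) * b k * c (m - k)) *
            PowerSeries.coeff (n + m) P := by ring
  calc (∑' m : ℕ, ((n + m).choose m : F) * d m * PowerSeries.coeff (n + m) P)
      = ∑' m : ℕ, ∑ p ∈ Finset.HasAntidiagonal.antidiagonal m, g p := tsum_congr fun m => (step3 m).symm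
    _ = ∑' m : ℕ, ∑' p : (Finset.HasAntidiagonal.antidiagonal m : Finset (ℕ × ℕ)),
          (g ∘ Finset.HasAntidiagonal.sigmaAntidiagonalEquivProd) ⟨m, p⟩ := by
        refine tsum_congr fun m => ?_
        rw [tsum_fintype, ← Finset.sum_coe_sort (Finset.HasAntidiagonal.antidiagonal m) g]
        exact Finset.sum_congr rfl fun p _ => rfl
    _ = ∑' x : (Σ m : ℕ, Finset.HasAntidiagonal.antidiagonal m), (g ∘ Finset.HasAntidiagonal.sigmaAntidiagonalEquivProd) x :=
        (Summable.tsum_sigma ((Finset.HasAntidiagonal.sigmaAntidiagonalEquivProd.summable_iff).mpr hg)).symm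
    _ = ∑' p : ℕ × ℕ, g p := Finset.HasAntidiagonal.sigmaAntidiagonalEquivProd.tsum_eq g
    _ = ∑' j : ℕ, ∑' i : ℕ, g (j, i) := Summable.tsum_prod hg
    _ = ∑' j : ℕ, ((n + j).choose j : F) * b j *
          ∑' i : ℕ, ((n + j + i).choose i : F) * c i * PowerSeries.coeff (n + j + i) P := by
        refine tsum_congr fun j => ?_
        simp only [hg_def]
        exact tsum_mul_left
end
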